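/- Let (X,d) be a metric space, μ a Borel measure on X, x₀ ∈ X, r(x) = d(x₀,x), and B(x₀,t) the open ball of radius t about x₀. Let a ∈ (0, 1/4), c > 0 and A ≥ 0. Assume: (1) there exist k > 0 and C > 0 with μ(B(x₀,t)) ≤ C(1+t)^k for all t > 0; (2) for every Q > 0, ε > 0 and α > 0, writing ξ(t) = (1+εt)^{-α} - (1+εQ)^{-α}, one has c ∫_{B(x₀,Q)} ξ(r(x))² dμ(x) ≤ A·ξ(0)² + ε²α((1-4a)α - 2a) ∫_{B(x₀,Q)} (1+ε r(x))^{-2α-2} dμ(x) + 2a·ε²·α(α+1)·(1+εQ)^{-α} ∫_{B(x₀,Q)} (1+ε r(x))^{-α-2} dμ(x). Then k₀ := inf{ k > 0 : there exists C > 0 with μ(B(x₀,t)) ≤ C(1+t)^k for all t > 0 } satisfies k₀ < 2 + 4a/(1-4a). -/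

import Mathlib

open Real MeasureTheory

set_option maxHeartbeats 1000000 in
lemma boot_aux {X : Type*} [MetricSpace X] [MeasurableSpace X] [BorelSpace X]
    (μ : Measure X) (x₀ : X) (a c A : ℝ)
    (ha : a ∈ Set.Ioo (0 : ℝ) (1 / 4)) (hc : 0 < c) (hA : 0 ≤ A)
    (hstab : ∀ Q > (0:ℝ), ∀ ε > (0:ℝ), ∀ α > (0:ℝ),
      c * ∫ x in Metric.ball x₀ Q,
            ((1 + ε * dist x₀ x) ^ (-α) - (1 + ε * Q) ^ (-α)) ^ 2 ∂μ
        ≤ A * ((1 + ε * 0) ^ (-α) - (1 + ε * Q) ^ (-α)) ^ 2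
          + ε ^ 2 * α * ((1 - 4 * a) * α - 2 * a) *
              ∫ x in Metric.ball x₀ Q, (1 + ε * dist x₀ x) ^ (-2 * α - 2) ∂μ
          + 2 * a * ε ^ 2 * α * (α + 1) * (1 + ε * Q) ^ (-α) *
              ∫ x in Metric.ball x₀ Q, (1 + ε * dist x₀ x) ^ (-α - 2) ∂μ)
    (k C : ℝ) (hk : 0 < k) (hC : 0 < C)
    (hb : ∀ t > (0:ℝ), μ (Metric.ball x₀ t) ≤ ENNReal.ofReal (C * (1 + t) ^ k)) :
    ∃ C' > (0:ℝ), ∀ t > (0:ℝ),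
      μ (Metric.ball x₀ t) ≤ ENNReal.ofReal (C' * (1 + t) ^ (max (k - 2) 2)) := by
  obtain ⟨ha1, ha2⟩ := ha
  set m : ℝ := max (k - 2) 2 with hm
  have hm2 : (2:ℝ) ≤ m := le_max_right _ _
  have hm0 : (0:ℝ) ≤ m := by linarith
  have hfin : ∀ t > (0:ℝ), μ (Metric.ball x₀ t) ≠ ⊤ := fun t ht =>
    (lt_of_le_of_lt (hb t ht) ENNReal.ofReal_lt_top).ne
  -- main per-radius estimate
  have key : ∀ R > (0:ℝ),
      c * (μ (Metric.ball x₀ R)).toReal ≤ 9 * A + 18 * (C * (1 + 2 * R) ^ k) / R ^ 2 := by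
    intro R hR
    set ε : ℝ := 1 / (2 * R) with hε
    have hεpos : 0 < ε := by positivity
    set Q : ℝ := 2 * R with hQdef
    have hQ : 0 < Q := by positivity
    have hεQ : ε * Q = 1 := by rw [hε, hQdef]; field_simp
    have hQpow : ((1:ℝ) + ε * Q) ^ (-(1:ℝ)) = 1/2 := by
      rw [hεQ, Real.rpow_neg_one]; norm_num
    have hone : ∀ x : X, (1:ℝ) ≤ 1 + ε * dist x₀ x := by
      intro x
      have h := dist_nonneg (x := x₀) (y := x)
      nlinarith
    have hpos : ∀ x : X, (0:ℝ) < 1 + ε * dist x₀ x := fun x => lt_of_lt_of_le one_pos (hone x)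
    have hcont : ∀ p : ℝ, Continuous (fun x : X => (1 + ε * dist x₀ x) ^ p) := by
      intro p
      apply Continuous.rpow_const
        (continuous_const.add (continuous_const.mul (continuous_const.dist continuous_id)))
      intro x; left; exact (hpos x).ne'
    have hint : ∀ p ≤ (0:ℝ), IntegrableOn (fun x => (1 + ε * dist x₀ x) ^ p)
        (Metric.ball x₀ Q) μ := by
      intro p hp
      apply Measure.integrableOn_of_bounded (M := 1) (hfin Q hQ)
        (hcont p).aestronglyMeasurable
      filter_upwards with x
      rw [Real.norm_eq_abs, abs_of_nonneg (Real.rpow_nonneg (hpos x).le _)]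
      exact Real.rpow_le_one_of_one_le_of_nonpos (hone x) hp
    have hmem01 : ∀ p ≤ (0:ℝ), ∀ x : X,
        (1 + ε * dist x₀ x) ^ p ∈ Set.Icc (0:ℝ) 1 := by
      intro p hp x
      exact ⟨Real.rpow_nonneg (hpos x).le _,
        Real.rpow_le_one_of_one_le_of_nonpos (hone x) hp⟩
    set ξ : X → ℝ := fun x => (1 + ε * dist x₀ x) ^ (-(1:ℝ)) - (1 + ε * Q) ^ (-(1:ℝ))
      with hξdef
    have hξcont : Continuous fun x => ξ x ^ 2 :=
      ((hcont (-(1:ℝ))).sub continuous_const).pow 2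
    have hξint : IntegrableOn (fun x => ξ x ^ 2) (Metric.ball x₀ Q) μ := by
      apply Measure.integrableOn_of_bounded (M := 1) (hfin Q hQ)
        hξcont.aestronglyMeasurable
      filter_upwards with x
      have h1 := hmem01 (-(1:ℝ)) (by norm_num) x
      rw [Real.norm_eq_abs, abs_of_nonneg (sq_nonneg _)]
      have hξx : ξ x = (1 + ε * dist x₀ x) ^ (-(1:ℝ)) - 1/2 := by rw [hξdef, hQpow]
      rw [hξx]
      nlinarith [h1.1, h1.2]
    set M : ℝ := (μ (Metric.ball x₀ Q)).toReal with hM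
    have hMnn : 0 ≤ M := ENNReal.toReal_nonneg
    have hconst : ∫ _x in Metric.ball x₀ Q, (1:ℝ) ∂μ = M := by
      rw [setIntegral_const]; simp [hM, Measure.real]
    have hI2ub : ∫ x in Metric.ball x₀ Q, (1 + ε * dist x₀ x) ^ (-2 * (1:ℝ) - 2) ∂μ ≤ M := by
      rw [← hconst]
      apply setIntegral_mono_on (hint _ (by norm_num))
        (integrableOn_const (hfin Q hQ)) measurableSet_ball
      intro x _; exact (hmem01 _ (by norm_num) x).2
    have hI3ub : ∫ x in Metric.ball x₀ Q, (1 + ε * dist x₀ x) ^ (-(1:ℝ) - 2) ∂μ ≤ M := by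
      rw [← hconst]
      apply setIntegral_mono_on (hint _ (by norm_num))
        (integrableOn_const (hfin Q hQ)) measurableSet_ball
      intro x _; exact (hmem01 _ (by norm_num) x).2
    have hI2lb : 0 ≤ ∫ x in Metric.ball x₀ Q, (1 + ε * dist x₀ x) ^ (-2 * (1:ℝ) - 2) ∂μ :=
      setIntegral_nonneg measurableSet_ball fun x _ => Real.rpow_nonneg (hpos x).le _
    have hI3lb : 0 ≤ ∫ x in Metric.ball x₀ Q, (1 + ε * dist x₀ x) ^ (-(1:ℝ) - 2) ∂μ :=
      setIntegral_nonneg measurableSet_ball fun x _ => Real.rpow_nonneg (hpos x).le _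
    have hRQ : R ≤ Q := by rw [hQdef]; linarith
    -- lower bound on the smaller ball
    have hξlow : ∀ x ∈ Metric.ball x₀ R, (1:ℝ)/36 ≤ ξ x ^ 2 := by
      intro x hx
      have hd : dist x₀ x < R := by rwa [Metric.mem_ball, dist_comm] at hx
      have hdn : 0 ≤ dist x₀ x := dist_nonneg
      have hub : 1 + ε * dist x₀ x ≤ 3/2 := by
        have hεd : ε * dist x₀ x ≤ 1/2 := by
          rw [hε, div_mul_eq_mul_div, one_mul, div_le_div_iff₀ (by positivity) (by norm_num)]
          nlinarith
        linarith
      have hinv : (2:ℝ)/3 ≤ (1 + ε * dist x₀ x) ^ (-(1:ℝ)) := by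
        rw [Real.rpow_neg_one]
        have h23 : ((3:ℝ)/2)⁻¹ ≤ (1 + ε * dist x₀ x)⁻¹ :=
          inv_anti₀ (hpos x) hub
        rw [show ((3:ℝ)/2)⁻¹ = 2/3 by norm_num] at h23
        exact h23
      have hξx : 1/6 ≤ ξ x := by
        have : ξ x = (1 + ε * dist x₀ x) ^ (-(1:ℝ)) - 1/2 := by rw [hξdef, hQpow]
        rw [this]; linarith
      nlinarith [hξx]
    have hlow : 1/36 * (μ (Metric.ball x₀ R)).toReal
        ≤ ∫ x in Metric.ball x₀ Q, ξ x ^ 2 ∂μ := by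
      calc 1/36 * (μ (Metric.ball x₀ R)).toReal
          ≤ ∫ x in Metric.ball x₀ R, ξ x ^ 2 ∂μ :=
            setIntegral_ge_of_const_le_real measurableSet_ball (hfin R hR) hξlow
              (hξint.mono_set (Metric.ball_subset_ball hRQ))
        _ ≤ ∫ x in Metric.ball x₀ Q, ξ x ^ 2 ∂μ :=
            setIntegral_mono_set hξint (ae_of_all _ fun x => sq_nonneg _)
              ((Metric.ball_subset_ball hRQ).eventuallyLE)
    -- instantiate the stability inequality
    have hst := hstab Q hQ ε hεpos 1 one_pos
    have hA0 : ((1:ℝ) + ε * 0) ^ (-(1:ℝ)) - (1 + ε * Q) ^ (-(1:ℝ)) = 1/2 := by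
      rw [hQpow, mul_zero, add_zero, Real.one_rpow]; norm_num
    rw [hA0] at hst
    set I2 := ∫ x in Metric.ball x₀ Q, (1 + ε * dist x₀ x) ^ (-2 * (1:ℝ) - 2) ∂μ with hI2
    set I3 := ∫ x in Metric.ball x₀ Q, (1 + ε * dist x₀ x) ^ (-(1:ℝ) - 2) ∂μ with hI3
    have hJ : c * (1/36 * (μ (Metric.ball x₀ R)).toReal)
        ≤ c * ∫ x in Metric.ball x₀ Q, ξ x ^ 2 ∂μ :=
      mul_le_mul_of_nonneg_left hlow hc.le
    have hterm2 : ε ^ 2 * 1 * ((1 - 4 * a) * 1 - 2 * a) * I2 ≤ ε ^ 2 * M := by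
      nlinarith [mul_nonneg (sq_nonneg ε) hI2lb,
        mul_le_mul_of_nonneg_left hI2ub (sq_nonneg ε),
        mul_nonneg (mul_nonneg ha1.le (sq_nonneg ε)) hI2lb]
    have hterm3 : 2 * a * ε ^ 2 * 1 * (1 + 1) * (1 + ε * Q) ^ (-(1:ℝ)) * I3 ≤ ε ^ 2 * M := by
      rw [hQpow]
      nlinarith [mul_nonneg (sq_nonneg ε) hI3lb,
        mul_le_mul_of_nonneg_left hI3ub (sq_nonneg ε),
        mul_nonneg (mul_nonneg ha1.le (sq_nonneg ε)) hI3lb]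
    have hMb : M ≤ C * (1 + Q) ^ k :=
      ENNReal.toReal_le_of_le_ofReal (by positivity) (hb Q hQ)
    have hcomb : c * (μ (Metric.ball x₀ R)).toReal
        ≤ 9 * A + 72 * ε ^ 2 * (C * (1 + Q) ^ k) := by
      have h1 : c * (1/36 * (μ (Metric.ball x₀ R)).toReal)
          ≤ A * (1/2) ^ 2 + ε ^ 2 * M + ε ^ 2 * M :=
        le_trans hJ (le_trans hst (by linarith))
      nlinarith [mul_le_mul_of_nonneg_left hMb (by positivity : (0:ℝ) ≤ 72 * ε ^ 2)]
    have hε2 : ε ^ 2 = 1 / (4 * R ^ 2) := by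
      rw [hε]; field_simp; ring
    rw [hε2] at hcomb
    calc c * (μ (Metric.ball x₀ R)).toReal
        ≤ 9 * A + 72 * (1 / (4 * R ^ 2)) * (C * (1 + Q) ^ k) := hcomb
      _ = 9 * A + 18 * (C * (1 + 2 * R) ^ k) / R ^ 2 := by
          rw [hQdef]; field_simp; ring
  -- convert to the polynomial bound with exponent m
  set C₁ : ℝ := (9 * A + 18 * C * 3 ^ k) / c with hC₁
  have h3k : (0:ℝ) < 3 ^ k := Real.rpow_pos_of_pos (by norm_num) k
  have hC₁pos : 0 < C₁ := div_pos (by nlinarith) hc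
  have hbig : ∀ R, 1 ≤ R → μ (Metric.ball x₀ R) ≤ ENNReal.ofReal (C₁ * (1 + R) ^ m) := by
    intro R hR1
    have hR : 0 < R := lt_of_lt_of_le one_pos hR1
    have h1 := key R hR
    have hmono : (1:ℝ) ≤ (1 + R) ^ m := Real.one_le_rpow (by linarith) hm0
    have hstep : (1 + 2 * R) ^ k / R ^ 2 ≤ 3 ^ k * (1 + R) ^ m := by
      have e1 : (1 + 2 * R) ^ k ≤ (3 * R) ^ k :=
        Real.rpow_le_rpow (by linarith) (by linarith) hk.le
      have e2 : (3 * R) ^ k = 3 ^ k * R ^ k := Real.mul_rpow (by norm_num) hR.le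
      have e3 : R ^ k / R ^ 2 = R ^ (k - 2) := by
        rw [Real.rpow_sub hR, Real.rpow_two]
      have e4 : R ^ (k - 2) ≤ (1 + R) ^ m :=
        le_trans (Real.rpow_le_rpow_of_exponent_le hR1 (le_max_left _ _))
          (Real.rpow_le_rpow hR.le (by linarith) hm0)
      calc (1 + 2 * R) ^ k / R ^ 2 ≤ (3 ^ k * R ^ k) / R ^ 2 := by
            rw [← e2]; exact div_le_div_of_nonneg_right e1 (by positivity)
        _ = 3 ^ k * (R ^ k / R ^ 2) := by ring
        _ = 3 ^ k * R ^ (k - 2) := by rw [e3]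
        _ ≤ 3 ^ k * (1 + R) ^ m := mul_le_mul_of_nonneg_left e4 h3k.le
    have hkey2 : c * (μ (Metric.ball x₀ R)).toReal
        ≤ 9 * A + 18 * C * (3 ^ k * (1 + R) ^ m) := by
      have h2 := mul_le_mul_of_nonneg_left hstep
        (show (0:ℝ) ≤ 18 * C by positivity)
      calc c * (μ (Metric.ball x₀ R)).toReal
          ≤ 9 * A + 18 * (C * (1 + 2 * R) ^ k) / R ^ 2 := h1
        _ = 9 * A + 18 * C * ((1 + 2 * R) ^ k / R ^ 2) := by ring
        _ ≤ 9 * A + 18 * C * (3 ^ k * (1 + R) ^ m) := by linarith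
    have ht : (μ (Metric.ball x₀ R)).toReal ≤ C₁ * (1 + R) ^ m := by
      rw [hC₁, div_mul_eq_mul_div, le_div_iff₀ hc]
      have h9 : 0 ≤ 9 * (A * (1 + R) ^ m - A) := by
        nlinarith [mul_nonneg hA (sub_nonneg.mpr hmono)]
      nlinarith [hkey2, h9]
    exact (ENNReal.le_ofReal_iff_toReal_le (hfin R hR) (by positivity)).mpr ht
  refine ⟨C₁ * 2 ^ m, by positivity, fun t ht => ?_⟩
  have h2m : (1:ℝ) ≤ 2 ^ m := Real.one_le_rpow (by norm_num) hm0
  rcases le_or_gt 1 t with h1t | h1t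
  · refine le_trans (hbig t h1t) (ENNReal.ofReal_le_ofReal ?_)
    have h0 : (0:ℝ) ≤ (1 + t) ^ m := Real.rpow_nonneg (by linarith) _
    nlinarith [mul_nonneg hC₁pos.le h0, h2m]
  · have hsub : μ (Metric.ball x₀ t) ≤ μ (Metric.ball x₀ 1) :=
      measure_mono (Metric.ball_subset_ball h1t.le)
    refine le_trans hsub (le_trans (hbig 1 le_rfl) (ENNReal.ofReal_le_ofReal ?_))
    have h1tm : (1:ℝ) ≤ (1 + t) ^ m := Real.one_le_rpow (by linarith) hm0
    have h11 : ((1:ℝ) + 1) ^ m = 2 ^ m := by norm_num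
    rw [h11]
    have h2nn : (0:ℝ) ≤ 2 ^ m := Real.rpow_nonneg (by norm_num) m
    nlinarith [mul_nonneg (mul_nonneg hC₁pos.le h2nn) (sub_nonneg.mpr h1tm)]

set_option maxHeartbeats 1000000 in
/-- Bootstrap Claim in Theorem 2 (case iii): if `a ∈ (0,1/4)`, `c > 0`, `A ≥ 0`, `μ` has
polynomial volume growth of some order `k > 0`, and the stability inequality (E-T1-3)
holds for all test functions `ξ(t) = (1+εt)^{-α} - (1+εQ)^{-α}`, then the infimum `k₀` of
the admissible polynomial growth orders satisfies `k₀ < 2 + 4a/(1-4a)`. -/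
theorem stmt_11 {X : Type*} [MetricSpace X] [MeasurableSpace X] [BorelSpace X]
    (μ : Measure X) (x₀ : X) (a c A : ℝ)
    (ha : a ∈ Set.Ioo (0 : ℝ) (1 / 4)) (hc : 0 < c) (hA : 0 ≤ A)
    (hpoly : ∃ k > (0:ℝ), ∃ C > (0:ℝ),
      ∀ t > (0:ℝ), μ (Metric.ball x₀ t) ≤ ENNReal.ofReal (C * (1 + t) ^ k))
    (hstab : ∀ Q > (0:ℝ), ∀ ε > (0:ℝ), ∀ α > (0:ℝ),
      c * ∫ x in Metric.ball x₀ Q,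
            ((1 + ε * dist x₀ x) ^ (-α) - (1 + ε * Q) ^ (-α)) ^ 2 ∂μ
        ≤ A * ((1 + ε * 0) ^ (-α) - (1 + ε * Q) ^ (-α)) ^ 2
          + ε ^ 2 * α * ((1 - 4 * a) * α - 2 * a) *
              ∫ x in Metric.ball x₀ Q, (1 + ε * dist x₀ x) ^ (-2 * α - 2) ∂μ
          + 2 * a * ε ^ 2 * α * (α + 1) * (1 + ε * Q) ^ (-α) *
              ∫ x in Metric.ball x₀ Q, (1 + ε * dist x₀ x) ^ (-α - 2) ∂μ) :
    sInf {k : ℝ | 0 < k ∧ ∃ C > (0:ℝ),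
        ∀ t > (0:ℝ), μ (Metric.ball x₀ t) ≤ ENNReal.ofReal (C * (1 + t) ^ k)}
      < 2 + 4 * a / (1 - 4 * a) := by
  -- iterate the bootstrap until the exponent is 2
  have iter : ∀ n : ℕ, ∀ k C : ℝ, 0 < k → 0 < C → k ≤ 2 + 2 * n →
      (∀ t > (0:ℝ), μ (Metric.ball x₀ t) ≤ ENNReal.ofReal (C * (1 + t) ^ k)) →
      ∃ C' > (0:ℝ), ∀ t > (0:ℝ),
        μ (Metric.ball x₀ t) ≤ ENNReal.ofReal (C' * (1 + t) ^ (2:ℝ)) := by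
    intro n
    induction n with
    | zero =>
      intro k C hk hC hle hb
      obtain ⟨C', hC', hb'⟩ := boot_aux μ x₀ a c A ha hc hA hstab k C hk hC hb
      rw [max_eq_right (by push_cast at hle; linarith)] at hb'
      exact ⟨C', hC', hb'⟩
    | succ n ih =>
      intro k C hk hC hle hb
      obtain ⟨C', hC', hb'⟩ := boot_aux μ x₀ a c A ha hc hA hstab k C hk hC hb
      have hmpos : 0 < max (k - 2) 2 := lt_max_of_lt_right two_pos
      have hmle : max (k - 2) 2 ≤ 2 + 2 * n := by
        push_cast at hle ⊢
        have : (0:ℝ) ≤ (n:ℝ) := Nat.cast_nonneg n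
        refine max_le (by linarith) (by linarith)
      exact ih (max (k - 2) 2) C' hmpos hC' hmle hb'
  obtain ⟨k, hk, C, hC, hb⟩ := hpoly
  have hkn : k ≤ 2 + 2 * (⌈k⌉₊ : ℝ) := by
    have := Nat.le_ceil k
    linarith [Nat.cast_nonneg (α := ℝ) ⌈k⌉₊]
  obtain ⟨C', hC', hb'⟩ := iter ⌈k⌉₊ k C hk hC hkn hb
  have h2mem : (2:ℝ) ∈ {k : ℝ | 0 < k ∧ ∃ C > (0:ℝ),
      ∀ t > (0:ℝ), μ (Metric.ball x₀ t) ≤ ENNReal.ofReal (C * (1 + t) ^ k)} :=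
    ⟨two_pos, C', hC', hb'⟩
  have hbdd : BddBelow {k : ℝ | 0 < k ∧ ∃ C > (0:ℝ),
      ∀ t > (0:ℝ), μ (Metric.ball x₀ t) ≤ ENNReal.ofReal (C * (1 + t) ^ k)} :=
    ⟨0, fun x hx => hx.1.le⟩
  have hle2 := csInf_le hbdd h2mem
  have hfrac : 0 < 4 * a / (1 - 4 * a) :=
    div_pos (by linarith [ha.1]) (by linarith [ha.2])
  linarith
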